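/- arXiv:1907.06278 — 2 statements merged into one kernel-verified Lean document; each statement's English description precedes it below -/
import Mathlib

section
/- The space E of strictly positive continuous functions on the torus with unit integral is a complete metric space under Hilbert's projective metric d_H. -/
noncomputable section
open MeasureTheory Filter

/-- The `d`-dimensional torus. -/
abbrev Torus (d : ℕ) := Fin d → AddCircle (1 : ℝ)

/-- `M(f,g) = inf {λ ≥ 0 : f ≤ λ g}` (pointwise order). -/
def Mcoef {d : ℕ} (f g : Torus d → ℝ) : ℝ :=
  sInf {l : ℝ | 0 ≤ l ∧ ∀ x, f x ≤ l * g x}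

/-- `m(f,g) = sup {μ ≥ 0 : μ g ≤ f}` (pointwise order). -/
def mcoef {d : ℕ} (f g : Torus d → ℝ) : ℝ :=
  sSup {m : ℝ | 0 ≤ m ∧ ∀ x, m * g x ≤ f x}

/-- Hilbert's projective distance. -/
def dH {d : ℕ} (f g : Torus d → ℝ) : ℝ :=
  Real.log (Mcoef f g) - Real.log (mcoef f g)

namespace HilbertAux

variable {d : ℕ}

lemma integrable (f : C(Torus d, ℝ)) : Integrable (⇑f) :=
  f.continuous.integrable_of_hasCompactSupport
    (IsCompact.of_isClosed_subset isCompact_univ (isClosed_tsupport f) (Set.subset_univ _))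

lemma MsetClosed (f g : Torus d → ℝ) :
    IsClosed {l : ℝ | 0 ≤ l ∧ ∀ x, f x ≤ l * g x} := by
  have : {l : ℝ | 0 ≤ l ∧ ∀ x, f x ≤ l * g x}
      = {l : ℝ | 0 ≤ l} ∩ ⋂ x, {l : ℝ | f x ≤ l * g x} := by
    ext l; simp [Set.mem_iInter]
  rw [this]
  refine IsClosed.inter (isClosed_le continuous_const continuous_id) ?_
  exact isClosed_iInter fun x =>
    isClosed_le continuous_const (continuous_id.mul continuous_const)

lemma msetClosed (f g : Torus d → ℝ) :
    IsClosed {m : ℝ | 0 ≤ m ∧ ∀ x, m * g x ≤ f x} := by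
  have : {m : ℝ | 0 ≤ m ∧ ∀ x, m * g x ≤ f x}
      = {m : ℝ | 0 ≤ m} ∩ ⋂ x, {m : ℝ | m * g x ≤ f x} := by
    ext m; simp [Set.mem_iInter]
  rw [this]
  refine IsClosed.inter (isClosed_le continuous_const continuous_id) ?_
  exact isClosed_iInter fun x =>
    isClosed_le (continuous_id.mul continuous_const) continuous_const

lemma MsetNonempty (f g : C(Torus d, ℝ)) (hg : ∀ x, 0 < g x) :
    ({l : ℝ | 0 ≤ l ∧ ∀ x, f x ≤ l * g x}).Nonempty := by
  obtain ⟨x₀, -, hx₀⟩ := isCompact_univ.exists_isMinOn Set.univ_nonempty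
    g.continuous.continuousOn
  refine ⟨‖f‖ / g x₀, div_nonneg (norm_nonneg _) (hg x₀).le, fun x => ?_⟩
  have h1 : f x ≤ ‖f‖ := (abs_le.mp (f.norm_coe_le_norm x)).2
  have h2 : ‖f‖ / g x₀ * g x₀ ≤ ‖f‖ / g x₀ * g x :=
    mul_le_mul_of_nonneg_left (hx₀ (Set.mem_univ x))
      (div_nonneg (norm_nonneg _) (hg x₀).le)
  calc f x ≤ ‖f‖ := h1
    _ = ‖f‖ / g x₀ * g x₀ := (div_mul_cancel₀ _ (hg x₀).ne').symm
    _ ≤ ‖f‖ / g x₀ * g x := h2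

lemma msetBddAbove (f g : Torus d → ℝ) (hg : ∀ x, 0 < g x) :
    BddAbove {m : ℝ | 0 ≤ m ∧ ∀ x, m * g x ≤ f x} := by
  obtain ⟨x₀⟩ : Nonempty (Torus d) := inferInstance
  refine ⟨f x₀ / g x₀, fun m hm => ?_⟩
  exact (le_div_iff₀ (hg x₀)).mpr (hm.2 x₀)

lemma Mcoef_mem (f g : C(Torus d, ℝ)) (hg : ∀ x, 0 < g x) :
    0 ≤ Mcoef ⇑f ⇑g ∧ ∀ x, f x ≤ Mcoef ⇑f ⇑g * g x :=
  (MsetClosed ⇑f ⇑g).csInf_mem (MsetNonempty f g hg) ⟨0, fun l hl => hl.1⟩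

lemma mcoef_mem (f g : C(Torus d, ℝ)) (hf : ∀ x, 0 ≤ f x) (hg : ∀ x, 0 < g x) :
    0 ≤ mcoef ⇑f ⇑g ∧ ∀ x, mcoef ⇑f ⇑g * g x ≤ f x :=
  (msetClosed ⇑f ⇑g).csSup_mem
    ⟨0, le_refl 0, fun x => by simpa using hf x⟩ (msetBddAbove ⇑f ⇑g hg)

lemma Mcoef_pos (f g : C(Torus d, ℝ)) (hf : ∀ x, 0 < f x) (hg : ∀ x, 0 < g x) :
    0 < Mcoef ⇑f ⇑g := by
  obtain ⟨x₀⟩ : Nonempty (Torus d) := inferInstance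
  have h := (Mcoef_mem f g hg).2 x₀
  nlinarith [hf x₀, hg x₀]

lemma mcoef_pos (f g : C(Torus d, ℝ)) (hf : ∀ x, 0 < f x) (hg : ∀ x, 0 < g x) :
    0 < mcoef ⇑f ⇑g := by
  obtain ⟨x₀, -, hx₀⟩ := isCompact_univ.exists_isMinOn Set.univ_nonempty
    f.continuous.continuousOn
  have hgn : 0 < ‖g‖ := by
    obtain ⟨y⟩ : Nonempty (Torus d) := inferInstance
    exact lt_of_lt_of_le (hg y) ((abs_le.mp (g.norm_coe_le_norm y)).2)
  have hmem : f x₀ / ‖g‖ ∈ {m : ℝ | 0 ≤ m ∧ ∀ x, m * g x ≤ f x} := by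
    refine ⟨div_nonneg (hf x₀).le hgn.le, fun x => ?_⟩
    have h1 : f x₀ / ‖g‖ * g x ≤ f x₀ / ‖g‖ * ‖g‖ :=
      mul_le_mul_of_nonneg_left ((abs_le.mp (g.norm_coe_le_norm x)).2)
        (div_nonneg (hf x₀).le hgn.le)
    calc f x₀ / ‖g‖ * g x ≤ f x₀ / ‖g‖ * ‖g‖ := h1
      _ = f x₀ := div_mul_cancel₀ _ hgn.ne'
      _ ≤ f x := hx₀ (Set.mem_univ x)
  exact lt_of_lt_of_le (div_pos (hf x₀) hgn)
    (le_csSup (msetBddAbove ⇑f ⇑g hg) hmem)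

/-- For normalized positive functions, `M ≥ 1`. -/
lemma one_le_Mcoef (f g : C(Torus d, ℝ)) (hg : ∀ x, 0 < g x)
    (hif : ∫ x, f x = 1) (hig : ∫ x, g x = 1) : 1 ≤ Mcoef ⇑f ⇑g := by
  have h := (Mcoef_mem f g hg).2
  have : ∫ x, f x ≤ ∫ x, Mcoef ⇑f ⇑g * g x :=
    integral_mono (integrable f) ((integrable g).const_mul _) h
  rw [hif, integral_const_mul, hig, mul_one] at this
  exact this

/-- For normalized positive functions, `m ≤ 1`. -/
lemma mcoef_le_one (f g : C(Torus d, ℝ)) (hf : ∀ x, 0 < f x) (hg : ∀ x, 0 < g x)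
    (hif : ∫ x, f x = 1) (hig : ∫ x, g x = 1) : mcoef ⇑f ⇑g ≤ 1 := by
  have h := (mcoef_mem f g (fun x => (hf x).le) hg).2
  have : ∫ x, mcoef ⇑f ⇑g * g x ≤ ∫ x, f x :=
    integral_mono ((integrable g).const_mul _) (integrable f) h
  rw [hif, integral_const_mul, hig, mul_one] at this
  exact this

/-- Upper bound: `d_H(f,g) ≤ 2 c` when `|log f - log g| ≤ c` pointwise. -/
lemma dH_le (f g : C(Torus d, ℝ)) (hf : ∀ x, 0 < f x) (hg : ∀ x, 0 < g x)
    (c : ℝ) (hc : ∀ x, |Real.log (f x) - Real.log (g x)| ≤ c) :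
    dH ⇑f ⇑g ≤ 2 * c := by
  have hMle : Mcoef ⇑f ⇑g ≤ Real.exp c := by
    apply csInf_le ⟨0, fun l hl => hl.1⟩
    refine ⟨(Real.exp_pos c).le, fun x => ?_⟩
    have h1 : Real.log (f x) ≤ c + Real.log (g x) := by
      have := (abs_le.mp (hc x)).2; linarith
    calc f x = Real.exp (Real.log (f x)) := (Real.exp_log (hf x)).symm
      _ ≤ Real.exp (c + Real.log (g x)) := Real.exp_le_exp.mpr h1
      _ = Real.exp c * g x := by rw [Real.exp_add, Real.exp_log (hg x)]
  have hmge : Real.exp (-c) ≤ mcoef ⇑f ⇑g := by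
    apply le_csSup (msetBddAbove ⇑f ⇑g hg)
    refine ⟨(Real.exp_pos _).le, fun x => ?_⟩
    have h1 : -c + Real.log (g x) ≤ Real.log (f x) := by
      have := (abs_le.mp (hc x)).1; linarith
    calc Real.exp (-c) * g x = Real.exp (-c + Real.log (g x)) := by
          rw [Real.exp_add, Real.exp_log (hg x)]
      _ ≤ Real.exp (Real.log (f x)) := Real.exp_le_exp.mpr h1
      _ = f x := Real.exp_log (hf x)
  have hM : Real.log (Mcoef ⇑f ⇑g) ≤ c := by
    calc Real.log (Mcoef ⇑f ⇑g) ≤ Real.log (Real.exp c) :=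
          Real.log_le_log (Mcoef_pos f g hf hg) hMle
      _ = c := Real.log_exp c
  have hm : -c ≤ Real.log (mcoef ⇑f ⇑g) := by
    calc -c = Real.log (Real.exp (-c)) := (Real.log_exp _).symm
      _ ≤ Real.log (mcoef ⇑f ⇑g) := Real.log_le_log (Real.exp_pos _) hmge
  unfold dH; linarith

/-- Lower bound: `|log f x - log g x| ≤ d_H(f,g)` for normalized functions. -/
lemma abs_log_le_dH (f g : C(Torus d, ℝ)) (hf : ∀ x, 0 < f x) (hg : ∀ x, 0 < g x)
    (hif : ∫ x, f x = 1) (hig : ∫ x, g x = 1) (x : Torus d) :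
    |Real.log (f x) - Real.log (g x)| ≤ dH ⇑f ⇑g := by
  set M := Mcoef ⇑f ⇑g with hMdef
  set m := mcoef ⇑f ⇑g with hmdef
  have hM1 : 1 ≤ M := one_le_Mcoef f g hg hif hig
  have hm1 : m ≤ 1 := mcoef_le_one f g hf hg hif hig
  have hmpos : 0 < m := mcoef_pos f g hf hg
  have hlogM : 0 ≤ Real.log M := Real.log_nonneg hM1
  have hlogm : Real.log m ≤ 0 := Real.log_nonpos hmpos.le hm1
  have hub : f x ≤ M * g x := (Mcoef_mem f g hg).2 x
  have hlb : m * g x ≤ f x := (mcoef_mem f g (fun y => (hf y).le) hg).2 x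
  have h1 : Real.log (f x) ≤ Real.log M + Real.log (g x) := by
    calc Real.log (f x) ≤ Real.log (M * g x) := Real.log_le_log (hf x) hub
      _ = Real.log M + Real.log (g x) :=
        Real.log_mul (by linarith : (0:ℝ) < M).ne' (hg x).ne'
  have h2 : Real.log m + Real.log (g x) ≤ Real.log (f x) := by
    calc Real.log m + Real.log (g x) = Real.log (m * g x) :=
          (Real.log_mul hmpos.ne' (hg x).ne').symm
      _ ≤ Real.log (f x) := Real.log_le_log (mul_pos hmpos (hg x)) hlb
  rw [abs_le]
  constructor
  · show -(dH ⇑f ⇑g) ≤ _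
    unfold dH; linarith
  · unfold dH; linarith

lemma dH_nonneg (f g : C(Torus d, ℝ)) (hf : ∀ x, 0 < f x) (hg : ∀ x, 0 < g x)
    (hif : ∫ x, f x = 1) (hig : ∫ x, g x = 1) : 0 ≤ dH ⇑f ⇑g := by
  have hM1 : 1 ≤ Mcoef ⇑f ⇑g := one_le_Mcoef f g hg hif hig
  have hm1 : mcoef ⇑f ⇑g ≤ 1 := mcoef_le_one f g hf hg hif hig
  have hmpos : 0 < mcoef ⇑f ⇑g := mcoef_pos f g hf hg
  have := Real.log_nonneg hM1
  have := Real.log_nonpos hmpos.le hm1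
  unfold dH; linarith

end HilbertAux

open HilbertAux

/-- The set `E` of strictly positive continuous functions on the torus with unit
integral is complete under Hilbert's projective metric: every Cauchy sequence
(with respect to `d_H`) converges in `E` with respect to `d_H`. -/
theorem stmt2 (d : ℕ) (u : ℕ → C(Torus d, ℝ))
    (hpos : ∀ n ω, 0 < u n ω) (hint : ∀ n, ∫ x, u n x = 1)
    (hcauchy : ∀ ε > (0 : ℝ), ∃ N, ∀ m ≥ N, ∀ n ≥ N, dH (⇑(u m)) (⇑(u n)) < ε) :
    ∃ f : C(Torus d, ℝ), (∀ x, 0 < f x) ∧ (∫ x, f x = 1) ∧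
      Tendsto (fun n => dH (⇑(u n)) (⇑f)) atTop (nhds 0) := by
  -- the sequence of logarithms
  have hvc : ∀ n, Continuous fun x => Real.log (u n x) := fun n =>
    Real.continuousOn_log.comp_continuous (u n).continuous fun x => (hpos n x).ne'
  set v : ℕ → C(Torus d, ℝ) := fun n => ⟨fun x => Real.log (u n x), hvc n⟩ with hvdef
  -- v is Cauchy in the sup metric
  have hvcauchy : CauchySeq v := by
    rw [Metric.cauchySeq_iff]
    intro ε hε
    obtain ⟨N, hN⟩ := hcauchy (ε / 2) (by linarith)
    refine ⟨N, fun m hm n hn => ?_⟩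
    have h1 : dist (v m) (v n) ≤ ε / 2 := by
      rw [ContinuousMap.dist_le (by linarith)]
      intro x
      have := abs_log_le_dH (u m) (u n) (hpos m) (hpos n) (hint m) (hint n) x
      calc dist (v m x) (v n x) = |Real.log (u m x) - Real.log (u n x)| := by
            simp [hvdef, Real.dist_eq]
        _ ≤ dH (⇑(u m)) (⇑(u n)) := this
        _ ≤ ε / 2 := (hN m hm n hn).le
    linarith [h1]
  obtain ⟨L, hL⟩ := cauchySeq_tendsto_of_complete hvcauchy
  -- candidate limit
  set f : C(Torus d, ℝ) := ⟨fun x => Real.exp (L x),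
    Real.continuous_exp.comp L.continuous⟩ with hfdef
  have hfpos : ∀ x, 0 < f x := fun x => Real.exp_pos _
  -- pointwise convergence of u n to f
  have hptwise : ∀ x, Tendsto (fun n => u n x) atTop (nhds (f x)) := by
    intro x
    have h1 : Tendsto (fun n => v n x) atTop (nhds (L x)) :=
      ((continuous_eval_const x).tendsto L).comp hL
    have h2 : Tendsto (fun n => Real.exp (v n x)) atTop (nhds (Real.exp (L x))) :=
      (Real.continuous_exp.tendsto (L x)).comp h1
    have : ∀ n, Real.exp (v n x) = u n x := fun n => Real.exp_log (hpos n x)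
    simpa [this, hfdef] using h2
  -- uniform bound
  have hbound : ∀ n x, |u n x| ≤ Real.exp (dist (v n) (v 0) + ‖v 0‖) := by
    intro n x
    have h1 : |v n x - v 0 x| ≤ dist (v n) (v 0) := by
      have := ContinuousMap.dist_apply_le_dist (f := v n) (g := v 0) x
      rwa [Real.dist_eq] at this
    have h2 : |v 0 x| ≤ ‖v 0‖ := (v 0).norm_coe_le_norm x
    have h3 : v n x ≤ dist (v n) (v 0) + ‖v 0‖ := by
      have := abs_le.mp h1; have := abs_le.mp h2; linarith
    have h4 : u n x = Real.exp (v n x) := (Real.exp_log (hpos n x)).symm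
    rw [abs_of_pos (hpos n x), h4]
    exact Real.exp_le_exp.mpr h3
  obtain ⟨R, -, hR⟩ := cauchySeq_bdd hvcauchy
  have hbound' : ∀ n x, |u n x| ≤ Real.exp (R + ‖v 0‖) := fun n x =>
    (hbound n x).trans (Real.exp_le_exp.mpr (by linarith [hR n 0]))
  -- integral of f is 1
  have hif : ∫ x, f x = 1 := by
    have hconv : Tendsto (fun n => ∫ x, u n x) atTop (nhds (∫ x, f x)) := by
      apply tendsto_integral_of_dominated_convergence
        (fun _ => Real.exp (R + ‖v 0‖))
      · exact fun n => (u n).continuous.aestronglyMeasurable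
      · exact integrable_const _
      · exact fun n => Filter.Eventually.of_forall fun x => by
          simpa [Real.norm_eq_abs] using hbound' n x
      · exact Filter.Eventually.of_forall fun x => hptwise x
    have h1 : Tendsto (fun _ : ℕ => (1 : ℝ)) atTop (nhds (∫ x, f x)) := by
      simpa [hint] using hconv
    exact (tendsto_nhds_unique tendsto_const_nhds h1).symm
  refine ⟨f, hfpos, hif, ?_⟩
  -- convergence in dH
  have hLf : ∀ x, Real.log (f x) = L x := fun x => Real.log_exp (L x)
  have hdist : Tendsto (fun n => dist (v n) L) atTop (nhds 0) :=
    (tendsto_iff_dist_tendsto_zero).mp hL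
  apply squeeze_zero
  · exact fun n => dH_nonneg (u n) f (hpos n) hfpos (hint n) hif
  · intro n
    apply dH_le (u n) f (hpos n) hfpos (dist (v n) L)
    intro x
    have h1 : |v n x - L x| ≤ dist (v n) L := by
      have := ContinuousMap.dist_apply_le_dist (f := v n) (g := L) x
      rwa [Real.dist_eq] at this
    simpa [hvdef, hLf x] using h1
  · simpa using hdist.const_mul 2
end
end

section
/- Let (E, d) be a complete metric space, (Ω, F, P, θ) an ergodic invertible measure-preserving discrete dynamical system, and A(ω) : E → E measurable maps that are weak contractions (Lipschitz constant τ(A(ω)) ≤ 1) with E[log τ(A)] < 0. Define the cocycle φ_n(ω) = A(θ^{n-1}ω) ∘ ⋯ ∘ A(ω). Then for almost every ω, limsup_{n→∞} (1/n) log sup_{f,g ∈ E, f≠g} d(φ_n(ω)f, φ_n(ω)g) ≤ E[log τ(A)] < 0, provided the diameters sup_{f,g} d(φ_n(ω)f, φ_n(ω)g) are finite. -/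
noncomputable section
open MeasureTheory Filter

/-- Extended-real logarithm: `log x` for `x > 0`, and `-∞` for `x ≤ 0`. -/
def elog (x : ℝ) : EReal := if x ≤ 0 then ⊥ else ((Real.log x : ℝ) : EReal)

/-- Truncated logarithm `max(log x, -M)`, with value `-M` for `x ≤ 0`. -/
def truncLog (M x : ℝ) : ℝ := if x ≤ 0 then -M else max (Real.log x) (-M)

theorem birkhoff_upper_aux {Ω : Type*} [MeasurableSpace Ω] (P : Measure Ω)
    [IsProbabilityMeasure P] (θ : Ω → Ω) (hθ : Measurable θ)
    (hmp : MeasurePreserving θ P P)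
    (herg : ∀ s : Set Ω, MeasurableSet s → θ ⁻¹' s = s → P s = 0 ∨ P s = 1)
    (g : Ω → ℝ) (hg : Measurable g) (K : ℝ) (hK : ∀ ω, |g ω| ≤ K)
    (ε : ℝ) (hε : 0 < ε) :
    ∀ᵐ ω ∂P, ∀ᶠ n in atTop,
      ∑ k ∈ Finset.range n, g (θ^[k] ω) ≤ n * ((∫ ω, g ω ∂P) + ε) := by
  classical
  have hne : Nonempty Ω := by
    by_contra h
    rw [not_nonempty_iff] at h
    have h1 : P Set.univ = 1 := measure_univ
    rw [Set.univ_eq_empty_iff.mpr h, measure_empty] at h1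
    exact zero_ne_one h1
  set S : ℕ → Ω → ℝ := fun n ω => ∑ k ∈ Finset.range n, g (θ^[k] ω) with hS_def
  have hK0 : 0 ≤ K := le_trans (abs_nonneg _) (hK (Classical.arbitrary _))
  have hSm : ∀ n, Measurable (S n) := fun n =>
    Finset.measurable_sum _ fun k _ => hg.comp (hθ.iterate k)
  have hgle : ∀ ω, g ω ≤ K := fun ω => (abs_le.mp (hK ω)).2
  have hgge : ∀ ω, -K ≤ g ω := fun ω => (abs_le.mp (hK ω)).1
  have hSub : ∀ n ω, S n ω ≤ n * K := by
    intro n ω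
    calc S n ω ≤ ∑ k ∈ Finset.range n, K := Finset.sum_le_sum fun k _ => hgle _
    _ = n * K := by simp [mul_comm]
  have hSlb : ∀ (n : ℕ) (ω : Ω), -((n : ℝ) * K) ≤ S n ω := by
    intro n ω
    calc -((n:ℝ) * K) = ∑ k ∈ Finset.range n, (-K) := by simp [mul_comm]
    _ ≤ S n ω := Finset.sum_le_sum fun k _ => hgge _
  have hS1 : ∀ n ω, S (n + 1) ω = S n (θ ω) + g ω := by
    intro n ω
    rw [hS_def]
    simp only
    rw [Finset.sum_range_succ']
    simp [Function.iterate_succ_apply]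
  -- the invariant sets
  set T : ℚ → Set Ω := fun q => {ω | ∀ᶠ n in atTop, S n ω ≤ n * q} with hT_def
  set U : ℚ → Set Ω := fun q => {ω | ∀ q' : ℚ, q < q' → ω ∈ T q'} with hU_def
  have hTm : ∀ q : ℚ, MeasurableSet (T q) := by
    intro q
    have : T q = ⋃ m : ℕ, ⋂ n : ℕ, ⋂ (_ : m ≤ n), {ω | S n ω ≤ n * q} := by
      ext ω
      simp [hT_def, eventually_atTop]
    rw [this]
    exact MeasurableSet.iUnion fun m => MeasurableSet.iInter fun n =>
      MeasurableSet.iInter fun _ => measurableSet_le (hSm n) measurable_const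
  have hUm : ∀ q : ℚ, MeasurableSet (U q) := by
    intro q
    have : U q = ⋂ q' : ℚ, ⋂ (_ : q < q'), T q' := by
      ext ω; simp [hU_def]
    rw [this]
    exact MeasurableSet.iInter fun q' => MeasurableSet.iInter fun _ => hTm q'
  -- U q is exactly invariant
  have hUinv : ∀ q : ℚ, θ ⁻¹' (U q) = U q := by
    intro q
    ext ω
    simp only [Set.mem_preimage, hU_def, Set.mem_setOf_eq]
    constructor
    · intro h q' hq'
      obtain ⟨q'', hq1, hq2⟩ := exists_rat_btwn (show ((q:ℝ)) < ((q':ℝ)) by exact_mod_cast hq')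
      have h2 := h q'' (by exact_mod_cast hq1)
      rw [hT_def] at h2 ⊢
      simp only [Set.mem_setOf_eq] at h2 ⊢
      have hten : ∀ᶠ n : ℕ in atTop, K - (q' : ℝ) ≤ n * ((q' : ℝ) - q'') := by
        have := Filter.Tendsto.atTop_mul_const (by exact_mod_cast sub_pos.mpr hq2 : (0:ℝ) < (q':ℝ) - q'') tendsto_natCast_atTop_atTop (α := ℝ)
        exact this.eventually_ge_atTop _
      have hev : ∀ᶠ n : ℕ in atTop, S (n + 1) ω ≤ (n + 1 : ℕ) * q' := by
        filter_upwards [h2, hten] with n h1 h3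
        rw [hS1]
        push_cast
        have : g ω ≤ K := hgle ω
        push_cast at h1
        nlinarith [h1, h3]
      obtain ⟨a, ha⟩ := eventually_atTop.mp hev
      refine eventually_atTop.mpr ⟨a + 1, fun m hm => ?_⟩
      obtain ⟨n, rfl⟩ : ∃ n, m = n + 1 := ⟨m - 1, by omega⟩
      exact ha n (by omega)
    · intro h q' hq'
      obtain ⟨q'', hq1, hq2⟩ := exists_rat_btwn (show ((q:ℝ)) < ((q':ℝ)) by exact_mod_cast hq')
      have h2 := h q'' (by exact_mod_cast hq1)
      rw [hT_def] at h2 ⊢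
      simp only [Set.mem_setOf_eq] at h2 ⊢
      have hten : ∀ᶠ n : ℕ in atTop, K + (q'' : ℝ) ≤ n * ((q' : ℝ) - q'') := by
        have := Filter.Tendsto.atTop_mul_const (by exact_mod_cast sub_pos.mpr hq2 : (0:ℝ) < (q':ℝ) - q'') tendsto_natCast_atTop_atTop (α := ℝ)
        exact this.eventually_ge_atTop _
      have h2' : ∀ᶠ n : ℕ in atTop, S (n+1) ω ≤ ((n+1 : ℕ) : ℝ) * q'' :=
        (tendsto_add_atTop_nat 1).eventually h2
      filter_upwards [h2', hten] with n h1 h3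
      have heq := hS1 n ω
      have hgK : -K ≤ g ω := hgge ω
      push_cast at h1 ⊢
      linarith [h1, h3]
  have hPU : ∀ q : ℚ, P (U q) = 0 ∨ P (U q) = 1 := fun q => herg _ (hUm q) (hUinv q)
  set Q1 : Set ℚ := {q | P (U q) = 1} with hQ1_def
  have hUmono : ∀ q q' : ℚ, q ≤ q' → U q ⊆ U q' := by
    intro q q' hqq ω hω rr hr
    exact hω rr (lt_of_le_of_lt hqq hr)
  have himg_ne : ((fun q : ℚ => (q:ℝ)) '' Q1).Nonempty := by
    obtain ⟨q0, hq0⟩ := exists_rat_gt K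
    refine ⟨(q0:ℝ), ⟨q0, ?_, rfl⟩⟩
    have huniv : U q0 = Set.univ := by
      ext ω
      simp only [hU_def, Set.mem_setOf_eq, Set.mem_univ, iff_true]
      intro q' hq'
      rw [hT_def]; simp only [Set.mem_setOf_eq]
      refine Eventually.of_forall fun n => ?_
      calc S n ω ≤ n * K := hSub n ω
      _ ≤ n * q' := by
        apply mul_le_mul_of_nonneg_left _ (Nat.cast_nonneg n)
        have h5 : (q0:ℝ) < q' := by exact_mod_cast hq'
        linarith [hq0]
    rw [hQ1_def]; simp only [Set.mem_setOf_eq]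
    rw [huniv]; exact measure_univ
  have himg_bdd : BddBelow ((fun q : ℚ => (q:ℝ)) '' Q1) := by
    refine ⟨-(K+1), ?_⟩
    rintro x ⟨q, hq, rfl⟩
    by_contra hx
    push_neg at hx
    obtain ⟨q', hq1, hq2⟩ := exists_rat_btwn (show ((q:ℝ)) < -K by linarith)
    have hempty : U q = ∅ := by
      ext ω
      simp only [hU_def, Set.mem_setOf_eq, Set.mem_empty_iff_false, iff_false]
      intro hω
      have h2 := hω q' (by exact_mod_cast hq1)
      rw [hT_def] at h2; simp only [Set.mem_setOf_eq] at h2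
      obtain ⟨a, ha⟩ := eventually_atTop.mp h2
      have h3 := ha (a+1) (by omega)
      have h4 := hSlb (a+1) ω
      have h5 : ((a+1:ℕ):ℝ) * (q':ℝ) < ((a+1:ℕ):ℝ) * (-K) := by
        apply mul_lt_mul_of_pos_left hq2 (by positivity)
      push_cast at h3 h4 h5 ⊢
      linarith
    rw [hQ1_def] at hq; simp only [Set.mem_setOf_eq] at hq
    rw [hempty, measure_empty] at hq
    exact zero_ne_one hq
  set c : ℝ := sInf ((fun q : ℚ => (q:ℝ)) '' Q1) with hc_def
  have hfull : ∀ q : ℚ, c < (q:ℝ) → P (U q) = 1 := by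
    intro q hq
    obtain ⟨x, ⟨q1, hq1, rfl⟩, hlt⟩ := exists_lt_of_csInf_lt himg_ne hq
    have hq1' : P (U q1) = 1 := hq1
    have hsub : U q1 ⊆ U q := hUmono _ _ (by exact_mod_cast (show ((q1:ℝ)) ≤ (q:ℝ) from hlt.le))
    refine le_antisymm prob_le_one ?_
    rw [← hq1']
    exact measure_mono hsub
  have hzero : ∀ q : ℚ, (q:ℝ) < c → P (U q) = 0 := by
    intro q hq
    rcases hPU q with h | h
    · exact h
    · exact absurd (csInf_le himg_bdd ⟨q, h, rfl⟩) (not_le.mpr hq)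
  have hint_g : Integrable g P := by
    refine Integrable.mono' (integrable_const K) hg.aestronglyMeasurable ?_
    exact Eventually.of_forall fun ω => by rw [Real.norm_eq_abs]; exact hK ω
  have hckey : ∀ δ : ℝ, 0 < δ → c - δ ≤ ∫ ω, g ω ∂P := by
    intro δ hδ
    set r : ℝ := c - δ with hr_def
    set W : Set Ω := {ω | ∃ n : ℕ, 1 ≤ n ∧ (n:ℝ) * r ≤ S n ω} with hW_def
    have hWm : MeasurableSet W := by
      have hWeq : W = ⋃ n : ℕ, ⋃ (_ : 1 ≤ n), {ω | (n:ℝ) * r ≤ S n ω} := by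
        ext ω; simp [hW_def]
      rw [hWeq]
      exact MeasurableSet.iUnion fun n => MeasurableSet.iUnion fun _ =>
        measurableSet_le measurable_const (hSm n)
    have hWfull : P Wᶜ = 0 := by
      obtain ⟨q, hq1, hq2⟩ := exists_rat_btwn (show c - δ < c by linarith)
      have h0 := hzero q hq2
      refine measure_mono_null ?_ h0
      intro ω hω
      simp only [Set.mem_compl_iff, hW_def, Set.mem_setOf_eq] at hω
      push_neg at hω
      rw [hU_def]; simp only [Set.mem_setOf_eq]
      intro q' hq'
      rw [hT_def]; simp only [Set.mem_setOf_eq]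
      refine eventually_atTop.mpr ⟨1, fun n hn => ?_⟩
      have hrq' : r < (q':ℝ) := by
        have : (q:ℝ) < q' := by exact_mod_cast hq'
        linarith
      calc S n ω ≤ n * r := (hω n hn).le
      _ ≤ n * q' := mul_le_mul_of_nonneg_left hrq'.le (Nat.cast_nonneg n)
    set G : Set Ω := ⋂ i : ℕ, θ^[i] ⁻¹' W with hG_def
    have hGfull : P Gᶜ = 0 := by
      rw [hG_def, Set.compl_iInter]
      refine measure_iUnion_null fun i => ?_
      rw [← Set.preimage_compl, (hmp.iterate i).measure_preimage hWm.compl.nullMeasurableSet]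
      exact hWfull
    have hGae : ∀ᵐ ω ∂P, ω ∈ G := by
      rw [ae_iff]; simpa [Set.compl_def] using hGfull
    have hGθ : ∀ ω ∈ G, ∀ j : ℕ, θ^[j] ω ∈ G := by
      intro ω hω j
      rw [hG_def] at hω ⊢
      simp only [Set.mem_iInter, Set.mem_preimage] at hω ⊢
      intro i
      rw [← Function.iterate_add_apply]
      exact hω (i + j)
    set K' : ℝ := K + |r| + 1 with hK'_def
    have hK'0 : 0 ≤ K' := by positivity
    have hKK' : K ≤ K' := by rw [hK'_def]; linarith [abs_nonneg r]
    have hrK' : r ≤ K' := le_trans (le_abs_self r) (by linarith [abs_nonneg r])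
    set A : ℕ → Set Ω := fun N => {ω | ∀ n : ℕ, 1 ≤ n → n ≤ N → S n ω < n * r} with hA_def
    have hAm : ∀ N, MeasurableSet (A N) := by
      intro N
      have hAeq : A N = ⋂ n : ℕ, ⋂ (_ : 1 ≤ n), ⋂ (_ : n ≤ N), {ω | S n ω < n * r} := by
        ext ω; simp [hA_def]
      rw [hAeq]
      exact MeasurableSet.iInter fun n => MeasurableSet.iInter fun _ =>
        MeasurableSet.iInter fun _ => measurableSet_lt (hSm n) measurable_const
    have hAanti : Antitone A := fun N M hNM ω hω n h1 h2 => hω n h1 (h2.trans hNM)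
    have hAinter : (⋂ N, A N) = Wᶜ := by
      ext ω
      simp only [Set.mem_iInter, hA_def, Set.mem_setOf_eq, Set.mem_compl_iff, hW_def]
      constructor
      · rintro h ⟨n, hn, hS⟩
        exact absurd hS (not_le.mpr (h n n hn le_rfl))
      · intro h N n h1 _
        by_contra hc2
        exact h ⟨n, h1, not_lt.mp hc2⟩
    have hPA : Tendsto (fun N => (P (A N)).toReal) atTop (nhds 0) := by
      have h1 : Tendsto (fun N => P (A N)) atTop (nhds (P (⋂ N, A N))) :=
        tendsto_measure_iInter_atTop (fun N => (hAm N).nullMeasurableSet) hAanti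
          ⟨0, measure_ne_top _ _⟩
      rw [hAinter, hWfull] at h1
      have h2 := (ENNReal.tendsto_toReal (by simp)).comp h1
      simpa [Function.comp_def] using h2
    have key2 : ∀ N : ℕ, r ≤ (∫ ω, g ω ∂P) + 2 * K' * (P (A N)).toReal := by
      intro N
      set g' : Ω → ℝ := fun ω => if ω ∈ A N then max (g ω) r else g ω with hg'_def
      have hg'm : Measurable g' := Measurable.ite (hAm N) (hg.max measurable_const) hg
      have hg'K : ∀ ω, |g' ω| ≤ K' := by
        intro ω
        rw [hg'_def]
        by_cases hω : ω ∈ A N <;> simp only [hω, if_true, if_false]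
        · rw [abs_le]
          constructor
          · have := hgge ω
            have h2 : -K' ≤ g ω := by linarith
            exact le_trans h2 (le_max_left _ _)
          · exact max_le (by linarith [hgle ω]) hrK'
        · rw [hK'_def]; linarith [hK ω, abs_nonneg r]
      have hg'ge : ∀ ω, g ω ≤ g' ω := by
        intro ω
        rw [hg'_def]
        by_cases hω : ω ∈ A N <;> simp [hω, le_max_left]
      have hg'int : Integrable g' P := by
        refine Integrable.mono' (integrable_const K') hg'm.aestronglyMeasurable ?_
        exact Eventually.of_forall fun ω => by rw [Real.norm_eq_abs]; exact hg'K ω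
      have hind : ∀ L : ℕ, ∀ ω ∈ G,
          (L:ℝ) * r - 2 * N * K' ≤ ∑ k ∈ Finset.range L, g' (θ^[k] ω) := by
        intro L
        induction L using Nat.strong_induction_on with
        | _ L IH =>
          intro ω hω
          by_cases hLN : L ≤ N
          · have h1 : ∀ k ∈ Finset.range L, -K' ≤ g' (θ^[k] ω) :=
              fun k _ => (abs_le.mp (hg'K _)).1
            have h2 : ((L:ℝ)) * (-K') ≤ ∑ k ∈ Finset.range L, g' (θ^[k] ω) := by
              calc (L:ℝ) * (-K') = ∑ _k ∈ Finset.range L, (-K') := by simp [mul_comm]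
              _ ≤ _ := Finset.sum_le_sum h1
            have hLN' : (L:ℝ) ≤ N := by exact_mod_cast hLN
            nlinarith [Nat.cast_nonneg (α := ℝ) L]
          · push_neg at hLN
            by_cases hA1 : ω ∈ A N
            · have hg'r : r ≤ g' ω := by
                rw [hg'_def]; simp [hA1, le_max_right]
              have hL1 : 1 ≤ L := by omega
              have hIH := IH (L - 1) (by omega) (θ ω) (by simpa using hGθ ω hω 1)
              have hsplit := Finset.sum_range_add (fun k => g' (θ^[k] ω)) 1 (L - 1)
              rw [show 1 + (L - 1) = L by omega] at hsplit
              have hre : ∀ x ∈ Finset.range (L-1), g' (θ^[1 + x] ω) = g' (θ^[x] (θ ω)) := by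
                intro x _
                rw [add_comm 1 x, Function.iterate_add_apply, Function.iterate_one]
              rw [Finset.sum_congr rfl hre] at hsplit
              rw [hsplit, Finset.sum_range_one]
              simp only [Function.iterate_zero, id_eq]
              have hcast : ((L - 1 : ℕ):ℝ) = (L:ℝ) - 1 := by
                rw [Nat.cast_sub hL1, Nat.cast_one]
              rw [hcast] at hIH
              linarith
            · rw [hA_def] at hA1
              simp only [Set.mem_setOf_eq] at hA1
              push_neg at hA1
              obtain ⟨j, hj1, hjN, hSj⟩ := hA1
              have hjL : j ≤ L := by omega
              have hIH := IH (L - j) (by omega) (θ^[j] ω) (hGθ ω hω j)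
              have hsplit := Finset.sum_range_add (fun k => g' (θ^[k] ω)) j (L - j)
              rw [show j + (L - j) = L by omega] at hsplit
              have hre : ∀ x ∈ Finset.range (L-j), g' (θ^[j + x] ω) = g' (θ^[x] (θ^[j] ω)) := by
                intro x _
                rw [add_comm j x, Function.iterate_add_apply]
              rw [Finset.sum_congr rfl hre] at hsplit
              rw [hsplit]
              have hfirst : (j:ℝ) * r ≤ ∑ k ∈ Finset.range j, g' (θ^[k] ω) :=
                le_trans hSj (Finset.sum_le_sum fun k _ => hg'ge _)
              have hcast : ((L - j : ℕ):ℝ) = (L:ℝ) - j := by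
                rw [Nat.cast_sub hjL]
              rw [hcast] at hIH
              linarith
      have hcomp : ∀ k : ℕ, ∫ ω, g' (θ^[k] ω) ∂P = ∫ ω, g' ω ∂P := by
        intro k
        have h1 : ∫ y, g' y ∂(Measure.map (θ^[k]) P) = ∫ ω, g' (θ^[k] ω) ∂P :=
          integral_map ((hθ.iterate k).aemeasurable)
            (by rw [(hmp.iterate k).map_eq]; exact hg'm.aestronglyMeasurable)
        rw [(hmp.iterate k).map_eq] at h1
        exact h1.symm
      have hSint : ∀ L : ℕ,
          ∫ ω, (∑ k ∈ Finset.range L, g' (θ^[k] ω)) ∂P = L * ∫ ω, g' ω ∂P := by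
        intro L
        rw [integral_finset_sum]
        · rw [Finset.sum_congr rfl fun k _ => hcomp k]
          simp [mul_comm]
        · intro k _
          refine Integrable.mono' (integrable_const K')
            ((hg'm.comp (hθ.iterate k)).aestronglyMeasurable) ?_
          exact Eventually.of_forall fun ω => by rw [Real.norm_eq_abs]; exact hg'K _
      have hineq : ∀ L : ℕ, (L:ℝ) * r - 2*N*K' ≤ L * ∫ ω, g' ω ∂P := by
        intro L
        rw [← hSint L]
        have hae2 : ∀ᵐ ω ∂P,
            (L:ℝ)*r - 2*N*K' ≤ ∑ k ∈ Finset.range L, g' (θ^[k] ω) := by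
          filter_upwards [hGae] with ω hω using hind L ω hω
        calc (L:ℝ)*r - 2*N*K' = ∫ _ω, ((L:ℝ)*r - 2*N*K') ∂P := by
              simp [integral_const]
        _ ≤ _ := by
              refine integral_mono_ae (integrable_const _) ?_ hae2
              refine Integrable.mono' (integrable_const ((L:ℝ) * K'))
                ((Finset.measurable_sum _ fun k _ => hg'm.comp (hθ.iterate k)).aestronglyMeasurable) ?_
              refine Eventually.of_forall fun ω => ?_
              rw [Real.norm_eq_abs]
              calc |∑ k ∈ Finset.range L, g' (θ^[k] ω)|
                  ≤ ∑ k ∈ Finset.range L, |g' (θ^[k] ω)| := Finset.abs_sum_le_sum_abs _ _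
              _ ≤ ∑ _k ∈ Finset.range L, K' := Finset.sum_le_sum fun k _ => hg'K _
              _ = (L:ℝ) * K' := by simp [mul_comm]
      have hrle : r ≤ ∫ ω, g' ω ∂P := by
        have ht : Tendsto (fun L : ℕ => (∫ ω, g' ω ∂P) + 2*N*K' / L) atTop
            (nhds ((∫ ω, g' ω ∂P) + 0)) :=
          tendsto_const_nhds.add (tendsto_const_div_atTop_nhds_zero_nat _)
        have hev : ∀ᶠ L : ℕ in atTop, r ≤ (∫ ω, g' ω ∂P) + 2*N*K' / L := by
          refine eventually_atTop.mpr ⟨1, fun L hL => ?_⟩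
          have hL0 : (0:ℝ) < L := by exact_mod_cast hL
          have h3 := hineq L
          rw [← sub_le_iff_le_add', le_div_iff₀ hL0]
          nlinarith [h3]
        have h4 := ge_of_tendsto ht hev
        simpa using h4
      have hcmp : ∫ ω, g' ω ∂P ≤ (∫ ω, g ω ∂P) + 2*K'*(P (A N)).toReal := by
        have hle : ∀ ω, g' ω ≤ g ω + Set.indicator (A N) (fun _ => 2*K') ω := by
          intro ω
          rw [hg'_def]
          by_cases hω : ω ∈ A N
          · rw [Set.indicator_of_mem hω]
            simp only [hω, if_true]
            have h1 : max (g ω) r ≤ K' := max_le (by linarith [hgle ω]) hrK'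
            have h2 : -K ≤ g ω := hgge ω
            have h3 : K ≤ K' := by rw [hK'_def]; linarith [abs_nonneg r]
            linarith
          · rw [Set.indicator_of_notMem hω]
            simp [hω]
        have hii : Integrable (Set.indicator (A N) (fun _ => 2*K')) P :=
          (integrable_const (2*K')).indicator (hAm N)
        calc ∫ ω, g' ω ∂P
            ≤ ∫ ω, (g ω + Set.indicator (A N) (fun _ => 2*K') ω) ∂P :=
              integral_mono hg'int (hint_g.add hii) hle
        _ = (∫ ω, g ω ∂P) + 2*K'*(P (A N)).toReal := by
              rw [integral_add hint_g hii]
              congr 1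
              rw [integral_indicator_const _ (hAm N)]
              simp [mul_comm]
              exact Or.inl rfl
      linarith
    have hlim2 : Tendsto (fun N => (∫ ω, g ω ∂P) + 2 * K' * (P (A N)).toReal) atTop
        (nhds ((∫ ω, g ω ∂P) + 2 * K' * 0)) :=
      tendsto_const_nhds.add (hPA.const_mul _)
    have h5 := ge_of_tendsto hlim2 (Eventually.of_forall key2)
    simpa using h5
  -- conclude
  have hcle : c ≤ (∫ ω, g ω ∂P) + ε/2 := by
    have := hckey (ε/2) (by linarith)
    linarith
  obtain ⟨q, hq1, hq2⟩ := exists_rat_btwn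
    (show (∫ ω, g ω ∂P) + ε/2 < (∫ ω, g ω ∂P) + ε*(3/4) by linarith)
  obtain ⟨q', hq1', hq2'⟩ := exists_rat_btwn
    (show ((q:ℝ)) < (∫ ω, g ω ∂P) + ε by linarith)
  have hPUq : P (U q) = 1 := hfull q (by linarith)
  have haeU : ∀ᵐ ω ∂P, ω ∈ U q := by
    have hc0 : P (U q)ᶜ = 0 := by
      rw [measure_compl (hUm q) (measure_ne_top _ _), hPUq, measure_univ]
      simp
    rw [ae_iff]; simpa [Set.compl_def] using hc0
  filter_upwards [haeU] with ω hω
  have h2 : ω ∈ T q' := hω q' (by exact_mod_cast hq1')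
  rw [hT_def] at h2; simp only [Set.mem_setOf_eq] at h2
  filter_upwards [h2] with n hn
  calc S n ω ≤ n * (q':ℝ) := hn
  _ ≤ n * ((∫ ω, g ω ∂P) + ε) := mul_le_mul_of_nonneg_left hq2'.le (Nat.cast_nonneg n)

/-- Random cocycles of weak contractions on a complete metric space: if
`d(A(ω)x, A(ω)y) ≤ τ(ω) d(x,y)` with `τ ≤ 1` and `E[log τ] < 0` (possibly
`-∞`), then almost surely the diameters of the images of the cocycle
`φ_n(ω) = A(θ^{n-1}ω) ∘ ⋯ ∘ A(ω)` decay exponentially with rate at most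
`E[log τ]`, provided they are finite. -/
theorem stmt9 {Ω : Type*} [MeasurableSpace Ω] (P : Measure Ω)
    [IsProbabilityMeasure P] (θ : Ω ≃ᵐ Ω)
    (hmp : MeasurePreserving (⇑θ) P P) (hmp' : MeasurePreserving (⇑θ.symm) P P)
    (herg : ∀ s : Set Ω, MeasurableSet s → (⇑θ) ⁻¹' s = s → P s = 0 ∨ P s = 1)
    {E : Type*} [MetricSpace E] [CompleteSpace E] [Nonempty E]
    (A : Ω → E → E) (τ : Ω → ℝ) (hτm : Measurable τ)
    (hτ01 : ∀ ω, τ ω ∈ Set.Icc (0:ℝ) 1)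
    (hcontr : ∀ ω x y, dist (A ω x) (A ω y) ≤ τ ω * dist x y)
    (φ : ℕ → Ω → E → E)
    (hφ0 : ∀ ω, φ 0 ω = id)
    (hφs : ∀ n ω, φ (n + 1) ω = A ((⇑θ)^[n] ω) ∘ φ n ω)
    (hbdd : ∀ ω n, Bornology.IsBounded (Set.range (φ n ω)))
    (hI : (⨅ M : ℕ, ((∫ ω, truncLog (M : ℝ) (τ ω) ∂P : ℝ) : EReal)) < 0) :
    ∀ᵐ ω ∂P, limsup
        (fun n : ℕ => (((n : ℝ)⁻¹ : ℝ) : EReal) *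
          elog (Metric.diam (Set.range (φ n ω)))) atTop ≤
      ⨅ M : ℕ, ((∫ ω, truncLog (M : ℝ) (τ ω) ∂P : ℝ) : EReal) := by
  classical
  have hθm : Measurable (⇑θ) := θ.measurable
  have hne : Nonempty Ω := by
    by_contra h
    rw [not_nonempty_iff] at h
    have h1 : P Set.univ = 1 := measure_univ
    rw [Set.univ_eq_empty_iff.mpr h, measure_empty] at h1
    exact zero_ne_one h1
  obtain ⟨ω0⟩ := hne
  have hDb : Bornology.IsBounded (Set.univ : Set E) := by
    have h := hbdd ω0 0
    rwa [hφ0 ω0, Set.range_id] at h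
  set D : ℝ := Metric.diam (Set.univ : Set E) with hD_def
  have hD0 : 0 ≤ D := Metric.diam_nonneg
  set g : ℕ → Ω → ℝ := fun M ω => truncLog (M:ℝ) (τ ω) with hg_def
  have hgm : ∀ M, Measurable (g M) := by
    intro M
    rw [hg_def]
    simp only [truncLog]
    exact Measurable.ite (measurableSet_le hτm measurable_const) measurable_const
      ((Real.measurable_log.comp hτm).max measurable_const)
  have hgK : ∀ M ω, |g M ω| ≤ (M:ℝ) := by
    intro M ω
    rw [hg_def]; simp only [truncLog]
    by_cases h : τ ω ≤ 0
    · rw [if_pos h, abs_neg, abs_of_nonneg (Nat.cast_nonneg M)]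
    · rw [if_neg h]
      push_neg at h
      have hlog : Real.log (τ ω) ≤ 0 := Real.log_nonpos (le_of_lt h) (hτ01 ω).2
      rw [abs_le]
      exact ⟨le_max_right _ _, le_trans (max_le hlog (by simp [Nat.cast_nonneg]))
        (Nat.cast_nonneg M)⟩
  have hτexp : ∀ M ω, τ ω ≤ Real.exp (g M ω) := by
    intro M ω
    rw [hg_def]; simp only [truncLog]
    by_cases h : τ ω ≤ 0
    · rw [if_pos h]
      exact le_trans h (Real.exp_pos _).le
    · rw [if_neg h]
      push_neg at h
      calc τ ω = Real.exp (Real.log (τ ω)) := (Real.exp_log h).symm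
      _ ≤ _ := Real.exp_le_exp.mpr (le_max_left _ _)
  have hdiam : ∀ ω n, Metric.diam (Set.range (φ n ω)) ≤
      (∏ k ∈ Finset.range n, τ ((⇑θ)^[k] ω)) * D := by
    intro ω n
    induction n with
    | zero =>
      rw [hφ0 ω, Set.range_id]
      simp [hD_def]
    | succ n ih =>
      rw [hφs n ω, Set.range_comp]
      have hC : 0 ≤ (∏ k ∈ Finset.range (n+1), τ ((⇑θ)^[k] ω)) * D :=
        mul_nonneg (Finset.prod_nonneg fun k _ => (hτ01 _).1) hD0
      refine Metric.diam_le_of_forall_dist_le hC ?_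
      rintro _ ⟨x, hx, rfl⟩ _ ⟨y, hy, rfl⟩
      calc dist (A ((⇑θ)^[n] ω) x) (A ((⇑θ)^[n] ω) y)
          ≤ τ ((⇑θ)^[n] ω) * dist x y := hcontr _ _ _
      _ ≤ τ ((⇑θ)^[n] ω) * Metric.diam (Set.range (φ n ω)) :=
          mul_le_mul_of_nonneg_left (Metric.dist_le_diam_of_mem (hbdd ω n) hx hy)
            (hτ01 _).1
      _ ≤ τ ((⇑θ)^[n] ω) * ((∏ k ∈ Finset.range n, τ ((⇑θ)^[k] ω)) * D) :=
          mul_le_mul_of_nonneg_left ih (hτ01 _).1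
      _ = (∏ k ∈ Finset.range (n+1), τ ((⇑θ)^[k] ω)) * D := by
          rw [Finset.prod_range_succ]; ring
  have hdiam2 : ∀ M ω n, Metric.diam (Set.range (φ n ω)) ≤
      Real.exp (∑ k ∈ Finset.range n, g M ((⇑θ)^[k] ω)) * D := by
    intro M ω n
    refine le_trans (hdiam ω n) (mul_le_mul_of_nonneg_right ?_ hD0)
    rw [Real.exp_sum]
    exact Finset.prod_le_prod (fun k _ => (hτ01 _).1) (fun k _ => hτexp M _)
  have hdiamD : ∀ ω n, Metric.diam (Set.range (φ n ω)) ≤ D :=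
    fun ω n => Metric.diam_mono (Set.subset_univ _) hDb
  have key : ∀ M : ℕ, ∀ᵐ ω ∂P, limsup
      (fun n : ℕ => (((n : ℝ)⁻¹ : ℝ) : EReal) *
        elog (Metric.diam (Set.range (φ n ω)))) atTop ≤
      ((∫ ω, truncLog (M : ℝ) (τ ω) ∂P : ℝ) : EReal) := by
    intro M
    set I : ℝ := ∫ ω, truncLog (M:ℝ) (τ ω) ∂P with hI_def
    have hIg : I = ∫ ω, g M ω ∂P := by rw [hI_def, hg_def]
    have hbk : ∀ᵐ ω ∂P, ∀ q : ℚ, 0 < q → ∀ᶠ n in atTop,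
        ∑ k ∈ Finset.range n, g M ((⇑θ)^[k] ω) ≤ n * (I + q) := by
      rw [ae_all_iff]
      intro q
      by_cases hq : 0 < q
      · have hb := birkhoff_upper_aux P (⇑θ) hθm hmp herg (g M) (hgm M) (M:ℝ)
          (hgK M) (q:ℝ) (by exact_mod_cast hq)
        filter_upwards [hb] with ω h _
        rw [hIg]
        exact h
      · filter_upwards with ω h; exact absurd h hq
    filter_upwards [hbk] with ω hω
    by_contra hcon
    push_neg at hcon
    obtain ⟨ρ, hρ1, hρ2⟩ := EReal.exists_rat_btwn_of_lt hcon
    have hb : I < (ρ:ℝ) := by exact_mod_cast hρ1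
    obtain ⟨q, hq1, hq2⟩ := exists_rat_btwn (show (0:ℝ) < ((ρ:ℝ) - I)/2 by linarith)
    have hq0 : 0 < q := by exact_mod_cast hq1
    have hev2 : ∀ᶠ n : ℕ in atTop, |Real.log D| / n ≤ ((ρ:ℝ) - I)/2 := by
      have ht := tendsto_const_div_atTop_nhds_zero_nat |Real.log D|
      exact (ht.eventually_lt_const (show (0:ℝ) < ((ρ:ℝ) - I)/2 by linarith)).mono
        fun n h => h.le
    have hev3 := hω q hq0
    have hfin : ∀ᶠ n : ℕ in atTop, (((n : ℝ)⁻¹ : ℝ) : EReal) *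
        elog (Metric.diam (Set.range (φ n ω))) ≤ (((ρ:ℝ)) : EReal) := by
      filter_upwards [hev2, hev3, eventually_ge_atTop 1] with n h2 h3 hn1
      have hn0 : (0:ℝ) < n := by exact_mod_cast hn1
      by_cases hd0 : Metric.diam (Set.range (φ n ω)) ≤ 0
      · rw [elog, if_pos hd0, EReal.mul_bot_of_pos
          (EReal.coe_pos.mpr (by positivity))]
        exact bot_le
      · push_neg at hd0
        rw [elog, if_neg (not_le.mpr hd0), ← EReal.coe_mul, EReal.coe_le_coe_iff]
        have hDpos : 0 < D := lt_of_lt_of_le hd0 (hdiamD ω n)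
        have hlog : Real.log (Metric.diam (Set.range (φ n ω))) ≤
            (∑ k ∈ Finset.range n, g M ((⇑θ)^[k] ω)) + Real.log D := by
          calc Real.log (Metric.diam (Set.range (φ n ω)))
              ≤ Real.log (Real.exp (∑ k ∈ Finset.range n, g M ((⇑θ)^[k] ω)) * D) :=
                Real.log_le_log hd0 (hdiam2 M ω n)
          _ = _ := by rw [Real.log_mul (Real.exp_ne_zero _) (ne_of_gt hDpos),
                Real.log_exp]
        have h6 : Real.log (Metric.diam (Set.range (φ n ω))) ≤
            (n:ℝ) * (I + q) + |Real.log D| :=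
          le_trans hlog (by linarith [h3, le_abs_self (Real.log D)])
        calc (n:ℝ)⁻¹ * Real.log (Metric.diam (Set.range (φ n ω)))
            ≤ (n:ℝ)⁻¹ * ((n:ℝ) * (I + q) + |Real.log D|) :=
              mul_le_mul_of_nonneg_left h6 (by positivity)
        _ = (I + q) + |Real.log D| / n := by field_simp
        _ ≤ (I + ((ρ:ℝ) - I)/2) + ((ρ:ℝ) - I)/2 :=
              add_le_add (add_le_add_right hq2.le _) h2
        _ ≤ (ρ:ℝ) := by linarith
    have hls := limsup_le_of_le (by isBoundedDefault) hfin
    exact absurd hρ2 (not_lt.mpr hls)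
  have hall := ae_all_iff.mpr key
  filter_upwards [hall] with ω hω
  exact le_iInf fun M => hω M
end
end
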